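/- Let Ω ⊂ ℝ³ be a Lebesgue-measurable set of finite Lebesgue measure |Ω|, let J ∈ L¹(ℝ³) with c_J := ‖J‖_{L¹(ℝ³)}, and suppose a(x) := ∫_Ω J(x−y) dy ≥ 0 for almost every x ∈ Ω. Let F : ℝ → ℝ be continuous with F(s) ≥ c₁ s² − c₂ for all s ∈ ℝ, where c₁ > c_J/2 and c₂ ≥ 0. Then for every φ ∈ L²(Ω) with F∘φ ∈ L¹(Ω), every θ ∈ L²(Ω), and every ε > 0: (1/2)∫_Ω a φ² dx − (1/2)∬_{Ω×Ω} J(x−y) φ(x) φ(y) dx dy + ∫_Ω F(φ) dx + (ε/2)∫_Ω θ² dx ≥ (c₁ − c_J/2) ‖φ‖²_{L²(Ω)} − c₂ |Ω| + (ε/2) ‖θ‖²_{L²(Ω)}. -/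

import Mathlib

open MeasureTheory

private lemma kernel_weight_aux
    (Ω : Set (EuclideanSpace ℝ (Fin 3))) (hΩ : MeasurableSet Ω)
    (K : EuclideanSpace ℝ (Fin 3) → ℝ) (hK : Integrable K) (hKnn : ∀ x, 0 ≤ K x)
    (ψ : EuclideanSpace ℝ (Fin 3) → ℝ) (hψ : Integrable ψ (volume.restrict Ω))
    (hψnn : ∀ x, 0 ≤ ψ x) :
    Integrable (fun p : EuclideanSpace ℝ (Fin 3) × EuclideanSpace ℝ (Fin 3) =>
        K (p.1 - p.2) * ψ p.1) ((volume.restrict Ω).prod (volume.restrict Ω)) ∧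
      (∫ p, K (p.1 - p.2) * ψ p.1 ∂((volume.restrict Ω).prod (volume.restrict Ω)))
        ≤ (∫ x, K x) * (∫ x, ψ x ∂(volume.restrict Ω)) := by
  set μ := volume.restrict Ω with hμ
  have hac : (μ.prod μ) ≪
      ((volume : Measure (EuclideanSpace ℝ (Fin 3))).prod volume) :=
    Measure.AbsolutelyContinuous.prod Measure.restrict_le_self.absolutelyContinuous
      Measure.restrict_le_self.absolutelyContinuous
  have hqmp : Measure.QuasiMeasurePreserving
      (fun p : (EuclideanSpace ℝ (Fin 3)) × (EuclideanSpace ℝ (Fin 3)) => p.1 - p.2)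
      (μ.prod μ) volume :=
    (quasiMeasurePreserving_sub volume volume).mono hac Measure.AbsolutelyContinuous.rfl
  have hKm : AEStronglyMeasurable
      (fun p : (EuclideanSpace ℝ (Fin 3)) × (EuclideanSpace ℝ (Fin 3)) => K (p.1 - p.2))
      (μ.prod μ) := hK.aestronglyMeasurable.comp_quasiMeasurePreserving hqmp
  have hψm : AEStronglyMeasurable
      (fun p : (EuclideanSpace ℝ (Fin 3)) × (EuclideanSpace ℝ (Fin 3)) => ψ p.1)
      (μ.prod μ) := hψ.aestronglyMeasurable.comp_fst
  have hmeas : AEStronglyMeasurable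
      (fun p : (EuclideanSpace ℝ (Fin 3)) × (EuclideanSpace ℝ (Fin 3)) => K (p.1 - p.2) * ψ p.1)
      (μ.prod μ) := hKm.mul hψm
  have hKx : ∀ x : EuclideanSpace ℝ (Fin 3), Integrable (fun y => K (x - y)) μ :=
    fun x => (hK.comp_sub_left x).integrableOn
  have hKle : ∀ x : EuclideanSpace ℝ (Fin 3), (∫ y, K (x - y) ∂μ) ≤ ∫ z, K z := by
    intro x
    calc (∫ y, K (x - y) ∂μ) ≤ ∫ y, K (x - y) :=
          setIntegral_le_integral (hK.comp_sub_left x)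
            (Filter.Eventually.of_forall fun y => hKnn _)
      _ = ∫ z, K z := integral_sub_left_eq_self K volume x
  have hKnn' : ∀ x : EuclideanSpace ℝ (Fin 3), 0 ≤ ∫ y, K (x - y) ∂μ :=
    fun x => integral_nonneg fun y => hKnn _
  have hint : Integrable (fun p : (EuclideanSpace ℝ (Fin 3)) × (EuclideanSpace ℝ (Fin 3)) =>
      K (p.1 - p.2) * ψ p.1) (μ.prod μ) := by
    refine (integrable_prod_iff hmeas).2 ⟨?_, ?_⟩
    · exact Filter.Eventually.of_forall fun x => (hKx x).mul_const (ψ x)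
    · have hgint : Integrable (fun x => (∫ z, K z) * ψ x) μ := hψ.const_mul _
      refine Integrable.mono' hgint hmeas.norm.integral_prod_right' ?_
      refine Filter.Eventually.of_forall fun x => ?_
      have h1 : (fun y => ‖K (x - y) * ψ x‖) = fun y => K (x - y) * ψ x := by
        funext y
        rw [Real.norm_eq_abs, abs_of_nonneg (mul_nonneg (hKnn _) (hψnn _))]
      rw [Real.norm_eq_abs]
      calc |∫ y, ‖K (x - y) * ψ x‖ ∂μ| = ∫ y, K (x - y) * ψ x ∂μ := by
            rw [h1, abs_of_nonneg (integral_nonneg fun y => mul_nonneg (hKnn _) (hψnn _))]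
        _ = (∫ y, K (x - y) ∂μ) * ψ x := by rw [integral_mul_const]
        _ ≤ (∫ z, K z) * ψ x := mul_le_mul_of_nonneg_right (hKle x) (hψnn x)
  refine ⟨hint, ?_⟩
  rw [integral_prod _ hint]
  have hrw : (fun x => ∫ y, K (x - y) * ψ x ∂μ)
      = fun x => (∫ y, K (x - y) ∂μ) * ψ x := by
    funext x; rw [integral_mul_const]
  rw [hrw]
  calc (∫ x, (∫ y, K (x - y) ∂μ) * ψ x ∂μ) ≤ ∫ x, (∫ z, K z) * ψ x ∂μ := by
        refine integral_mono_of_nonneg ?_ (hψ.const_mul _) ?_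
        · exact Filter.Eventually.of_forall fun x => mul_nonneg (hKnn' x) (hψnn x)
        · exact Filter.Eventually.of_forall fun x =>
            mul_le_mul_of_nonneg_right (hKle x) (hψnn x)
    _ = (∫ z, K z) * ∫ x, ψ x ∂μ := integral_const_mul _ _

theorem energy_coercivity
    (Ω : Set (EuclideanSpace ℝ (Fin 3))) (hΩ : MeasurableSet Ω)
    (hΩfin : volume Ω < ⊤)
    (J : EuclideanSpace ℝ (Fin 3) → ℝ) (hJ : Integrable J)
    (ha_pos : ∀ᵐ x ∂(volume.restrict Ω), (∫ y in Ω, J (x - y)) ≥ 0)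
    (F : ℝ → ℝ) (hF : Continuous F)
    (c₁ c₂ : ℝ) (hc₁ : c₁ > (∫ x, |J x|) / 2) (hc₂ : 0 ≤ c₂)
    (hF_low : ∀ s, F s ≥ c₁ * s ^ 2 - c₂)
    (φ θ : EuclideanSpace ℝ (Fin 3) → ℝ)
    (hφ : MemLp φ 2 (volume.restrict Ω))
    (hFφ : IntegrableOn (fun x => F (φ x)) Ω)
    (hθ : MemLp θ 2 (volume.restrict Ω))
    (ε : ℝ) (hε : 0 < ε) :
    (1 / 2 : ℝ) * (∫ x in Ω, (∫ y in Ω, J (x - y)) * (φ x) ^ 2)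
      - (1 / 2 : ℝ) * (∫ p in Ω ×ˢ Ω, J (p.1 - p.2) * φ p.1 * φ p.2)
      + (∫ x in Ω, F (φ x))
      + ε / 2 * (∫ x in Ω, (θ x) ^ 2)
    ≥ (c₁ - (∫ x, |J x|) / 2) * (∫ x in Ω, (φ x) ^ 2)
      - c₂ * (volume Ω).toReal
      + ε / 2 * (∫ x in Ω, (θ x) ^ 2) := by
  have hφ2 : Integrable (fun x => (φ x) ^ 2) (volume.restrict Ω) := hφ.integrable_sq
  -- nonnegativity of the a-term
  have hA : 0 ≤ ∫ x in Ω, (∫ y in Ω, J (x - y)) * (φ x) ^ 2 := by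
    refine integral_nonneg_of_ae ?_
    filter_upwards [ha_pos] with x hx
    exact mul_nonneg hx (sq_nonneg _)
  -- lower bound on F-term
  have hconst : Integrable (fun _ : EuclideanSpace ℝ (Fin 3) => c₂) (volume.restrict Ω) :=
    integrableOn_const hΩfin.ne
  have hFbound : (∫ x in Ω, F (φ x))
      ≥ c₁ * (∫ x in Ω, (φ x) ^ 2) - c₂ * (volume Ω).toReal := by
    have hci : Integrable (fun x => c₁ * (φ x) ^ 2 - c₂) (volume.restrict Ω) :=
      (hφ2.const_mul c₁).sub hconst
    have h1 : (∫ x in Ω, (c₁ * (φ x) ^ 2 - c₂)) ≤ ∫ x in Ω, F (φ x) :=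
      integral_mono hci hFφ fun x => hF_low (φ x)
    have h2 : (∫ x in Ω, (c₁ * (φ x) ^ 2 - c₂))
        = c₁ * (∫ x in Ω, (φ x) ^ 2) - c₂ * (volume Ω).toReal := by
      rw [integral_sub (hφ2.const_mul c₁) hconst, integral_const_mul,
        setIntegral_const, smul_eq_mul, Measure.real]
      ring
    linarith
  -- bound on the interaction term
  have hB : |∫ p in Ω ×ˢ Ω, J (p.1 - p.2) * φ p.1 * φ p.2|
      ≤ (∫ x, |J x|) * (∫ x in Ω, (φ x) ^ 2) := by
    set μ := volume.restrict Ω with hμ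
    have haux1 := kernel_weight_aux Ω hΩ (fun z => |J z|) hJ.abs (fun z => abs_nonneg _)
      (fun x => (φ x) ^ 2) hφ2 (fun x => sq_nonneg _)
    have hJneg : Integrable (fun z : EuclideanSpace ℝ (Fin 3) => |J (-z)|) := hJ.comp_neg.abs
    have haux2 := kernel_weight_aux Ω hΩ (fun z => |J (-z)|) hJneg (fun z => abs_nonneg _)
      (fun x => (φ x) ^ 2) hφ2 (fun x => sq_nonneg _)
    have hKneg : (∫ z, |J (-z)|) = ∫ x, |J x| := integral_neg_eq_self (fun z => |J z|) volume
    have hswap : MeasurePreserving (Prod.swap) (μ.prod μ) (μ.prod μ) :=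
      Measure.measurePreserving_swap
    have hg2eq : (fun p : (EuclideanSpace ℝ (Fin 3)) × (EuclideanSpace ℝ (Fin 3)) =>
          |J (-(p.1 - p.2))| * (φ p.1) ^ 2) ∘ Prod.swap
        = fun p => |J (p.1 - p.2)| * (φ p.2) ^ 2 := by
      funext p; simp [neg_sub]
    have h2int : Integrable (fun p : (EuclideanSpace ℝ (Fin 3)) × (EuclideanSpace ℝ (Fin 3)) =>
        |J (p.1 - p.2)| * (φ p.2) ^ 2) (μ.prod μ) := by
      rw [← hg2eq]
      exact (hswap.integrable_comp_emb MeasurableEquiv.prodComm.measurableEmbedding).2 haux2.1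
    have h2val : (∫ p, |J (p.1 - p.2)| * (φ p.2) ^ 2 ∂(μ.prod μ))
        ≤ (∫ x, |J x|) * (∫ x in Ω, (φ x) ^ 2) := by
      have heq : (∫ p, |J (p.1 - p.2)| * (φ p.2) ^ 2 ∂(μ.prod μ))
          = ∫ p, |J (-(p.1 - p.2))| * (φ p.1) ^ 2 ∂(μ.prod μ) := by
        have h := hswap.integral_comp MeasurableEquiv.prodComm.measurableEmbedding
          (fun p : (EuclideanSpace ℝ (Fin 3)) × (EuclideanSpace ℝ (Fin 3)) =>
            |J (-(p.1 - p.2))| * (φ p.1) ^ 2)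
        rw [← h]
        exact integral_congr_ae (Filter.Eventually.of_forall fun p => by simp [neg_sub])
      rw [heq]
      calc (∫ p, |J (-(p.1 - p.2))| * (φ p.1) ^ 2 ∂(μ.prod μ))
          ≤ (∫ z, |J (-z)|) * (∫ x in Ω, (φ x) ^ 2) := haux2.2
        _ = (∫ x, |J x|) * (∫ x in Ω, (φ x) ^ 2) := by rw [hKneg]
    have h1val : (∫ p, |J (p.1 - p.2)| * (φ p.1) ^ 2 ∂(μ.prod μ))
        ≤ (∫ x, |J x|) * (∫ x in Ω, (φ x) ^ 2) := haux1.2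
    set m : (EuclideanSpace ℝ (Fin 3)) × (EuclideanSpace ℝ (Fin 3)) → ℝ :=
      fun p => (|J (p.1 - p.2)| * (φ p.1) ^ 2 + |J (p.1 - p.2)| * (φ p.2) ^ 2) / 2 with hm
    have hmint : Integrable m (μ.prod μ) := (haux1.1.add h2int).div_const 2
    have hmval : (∫ p, m p ∂(μ.prod μ)) ≤ (∫ x, |J x|) * (∫ x in Ω, (φ x) ^ 2) := by
      rw [hm, integral_div, integral_add haux1.1 h2int]
      linarith
    have hrestr : (∫ p in Ω ×ˢ Ω, J (p.1 - p.2) * φ p.1 * φ p.2)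
        = ∫ p, J (p.1 - p.2) * φ p.1 * φ p.2 ∂(μ.prod μ) := by
      rw [hμ, Measure.prod_restrict, ← Measure.volume_eq_prod]
    rw [hrestr]
    have habs : |∫ p, J (p.1 - p.2) * φ p.1 * φ p.2 ∂(μ.prod μ)|
        ≤ ∫ p, ‖J (p.1 - p.2) * φ p.1 * φ p.2‖ ∂(μ.prod μ) := by
      rw [← Real.norm_eq_abs]
      exact norm_integral_le_integral_norm _
    refine le_trans habs (le_trans ?_ hmval)
    refine integral_mono_of_nonneg (Filter.Eventually.of_forall fun p => norm_nonneg _)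
      hmint (Filter.Eventually.of_forall fun p => ?_)
    show ‖J (p.1 - p.2) * φ p.1 * φ p.2‖ ≤ m p
    rw [hm, Real.norm_eq_abs]
    have hsplit : |J (p.1 - p.2) * φ p.1 * φ p.2| = |J (p.1 - p.2)| * |φ p.1 * φ p.2| := by
      rw [mul_assoc, abs_mul]
    rw [hsplit]
    have hab : |φ p.1 * φ p.2| ≤ ((φ p.1) ^ 2 + (φ p.2) ^ 2) / 2 := by
      rw [abs_mul]
      nlinarith [sq_nonneg (|φ p.1| - |φ p.2|), sq_abs (φ p.1), sq_abs (φ p.2),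
        abs_nonneg (φ p.1), abs_nonneg (φ p.2)]
    calc |J (p.1 - p.2)| * |φ p.1 * φ p.2|
        ≤ |J (p.1 - p.2)| * (((φ p.1) ^ 2 + (φ p.2) ^ 2) / 2) :=
          mul_le_mul_of_nonneg_left hab (abs_nonneg _)
      _ = (|J (p.1 - p.2)| * (φ p.1) ^ 2 + |J (p.1 - p.2)| * (φ p.2) ^ 2) / 2 := by ring
  have hBle : (∫ p in Ω ×ˢ Ω, J (p.1 - p.2) * φ p.1 * φ p.2)
      ≤ (∫ x, |J x|) * (∫ x in Ω, (φ x) ^ 2) := (abs_le.1 hB).2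
  have hring : (c₁ - (∫ x, |J x|) / 2) * (∫ x in Ω, (φ x) ^ 2)
      = c₁ * (∫ x in Ω, (φ x) ^ 2)
        - ((∫ x, |J x|) * (∫ x in Ω, (φ x) ^ 2)) / 2 := by ring
  linarith [hA, hFbound, hBle, hring]
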